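/- Telescoping elliptic potential: let Σ₁ be positive definite and define Σ_{j+1} = Σ_j + A_j for PSD matrices A_j, j = 1,…,P. If for each j, tr(Σ_j^{-1/2} A_j Σ_j^{-1/2}) ≤ L for some L ≥ e − 1, then Σ_{j=1}^P tr(Σ_j^{-1/2} A_j Σ_j^{-1/2}) ≤ L · log(det Σ_{P+1}/det Σ₁). -/

import Mathlib

open Matrix Finset

open scoped ComplexOrder in
/-- The square root of a positive semidefinite matrix, as `Matrix.PosSemidef.sqrt` was defined
in the older Mathlib (removed since). -/
noncomputable def Matrix.PosSemidef.sqrt {n 𝕜 : Type*} [Fintype n] [DecidableEq n] [RCLike 𝕜]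
    {A : Matrix n n 𝕜} (hA : A.PosSemidef) : Matrix n n 𝕜 :=
  hA.1.eigenvectorUnitary.1 * diagonal ((↑) ∘ Real.sqrt ∘ hA.1.eigenvalues) *
    (star hA.1.eigenvectorUnitary : Matrix n n 𝕜)

lemma Matrix.PosSemidef.sqrt_mul_self {d : ℕ} {A : Matrix (Fin d) (Fin d) ℝ}
    (hA : A.PosSemidef) : hA.sqrt * hA.sqrt = A := by
  have hU' : (star (hA.1.eigenvectorUnitary : Matrix (Fin d) (Fin d) ℝ)) *
      (hA.1.eigenvectorUnitary : Matrix (Fin d) (Fin d) ℝ) = 1 :=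
    Matrix.mem_unitaryGroup_iff'.mp hA.1.eigenvectorUnitary.2
  unfold Matrix.PosSemidef.sqrt
  rw [show ∀ U D V : Matrix (Fin d) (Fin d) ℝ, U * D * V * (U * D * V) = U * D * (V * U) * D * V
    from fun U D V => by simp only [Matrix.mul_assoc], hU', Matrix.mul_one,
    Matrix.mul_assoc _ (diagonal _) (diagonal _), diagonal_mul_diagonal]
  conv_rhs => rw [hA.1.spectral_theorem, Unitary.conjStarAlgAut_apply]
  congr 2
  ext i j
  simp only [diagonal_apply]
  split_ifs <;> simp [Real.mul_self_sqrt (hA.eigenvalues_nonneg i)]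

lemma Matrix.PosSemidef.sqrt_isHermitian {d : ℕ} {A : Matrix (Fin d) (Fin d) ℝ}
    (hA : A.PosSemidef) : hA.sqrt.IsHermitian := by
  unfold Matrix.IsHermitian Matrix.PosSemidef.sqrt
  simp [Matrix.conjTranspose_mul, Matrix.mul_assoc, Matrix.diagonal_conjTranspose,
    Matrix.star_eq_conjTranspose, Matrix.conjTranspose_eq_transpose_of_trivial]

lemma scalar_step {t L : ℝ} (ht : 0 ≤ t) (htL : t ≤ L) (hL : Real.exp 1 - 1 ≤ L) :
    t ≤ L * Real.log (1 + t) := by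
  have hL0 : 0 < L := lt_of_lt_of_le (by nlinarith [Real.exp_one_gt_d9]) hL
  set s := t / L with hs
  have hs0 : 0 ≤ s := div_nonneg ht hL0.le
  have hs1 : s ≤ 1 := (div_le_one hL0).2 htL
  have hconv := convexOn_exp.2 (Set.mem_univ (0:ℝ)) (Set.mem_univ (1:ℝ))
      (by linarith : (0:ℝ) ≤ 1 - s) hs0 (by ring)
  simp only [smul_eq_mul, mul_zero, mul_one, zero_add, Real.exp_zero] at hconv
  have hst : s * L = t := div_mul_cancel₀ t hL0.ne'
  have h1 : Real.exp s ≤ 1 + t := by nlinarith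
  have h2 : s ≤ Real.log (1 + t) := by
    have := Real.log_le_log (Real.exp_pos s) h1
    rwa [Real.log_exp] at this
  calc t = L * s := by rw [hs]; field_simp
    _ ≤ L * Real.log (1 + t) := by nlinarith

lemma trace_le_log_det {d : ℕ} {M : Matrix (Fin d) (Fin d) ℝ} (hM : M.PosSemidef)
    {L : ℝ} (hL : Real.exp 1 - 1 ≤ L) (htr : M.trace ≤ L) :
    M.trace ≤ L * Real.log ((1 + M).det) := by
  have hH := hM.isHermitian
  set μ := hH.eigenvalues with hμ
  have hμ0 : ∀ i, 0 ≤ μ i := hM.eigenvalues_nonneg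
  -- trace = sum of eigenvalues
  have htrace : M.trace = ∑ i, μ i := by
    conv_lhs => rw [hH.spectral_theorem, Unitary.conjStarAlgAut_apply]
    rw [Matrix.trace_mul_cycle]
    have : (star (hH.eigenvectorUnitary : Matrix (Fin d) (Fin d) ℝ)) *
        (hH.eigenvectorUnitary : Matrix (Fin d) (Fin d) ℝ) = 1 :=
      Matrix.mem_unitaryGroup_iff'.mp hH.eigenvectorUnitary.2
    rw [this, Matrix.one_mul, Matrix.trace_diagonal]
    simp [hμ]
  -- det (1 + M) = ∏ (1 + μ i)
  have hdet : (1 + M).det = ∏ i, (1 + μ i) := by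
    conv_lhs => rw [hH.spectral_theorem]
    have hU : (hH.eigenvectorUnitary : Matrix (Fin d) (Fin d) ℝ) *
        (star (hH.eigenvectorUnitary : Matrix (Fin d) (Fin d) ℝ)) = 1 :=
      Matrix.mem_unitaryGroup_iff.mp hH.eigenvectorUnitary.2
    calc (1 + (hH.eigenvectorUnitary : Matrix (Fin d) (Fin d) ℝ) *
          Matrix.diagonal (RCLike.ofReal ∘ μ) *
          (star (hH.eigenvectorUnitary : Matrix (Fin d) (Fin d) ℝ))).det
        = ((hH.eigenvectorUnitary : Matrix (Fin d) (Fin d) ℝ) *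
          (((1 : Matrix (Fin d) (Fin d) ℝ) + Matrix.diagonal (RCLike.ofReal ∘ μ))) *
          (star (hH.eigenvectorUnitary : Matrix (Fin d) (Fin d) ℝ))).det := by
          rw [Matrix.mul_add, Matrix.add_mul, Matrix.mul_one, hU]
      _ = (((1 : Matrix (Fin d) (Fin d) ℝ) + Matrix.diagonal (RCLike.ofReal ∘ μ))).det := by
          have hU' : (star (hH.eigenvectorUnitary : Matrix (Fin d) (Fin d) ℝ)) *
              (hH.eigenvectorUnitary : Matrix (Fin d) (Fin d) ℝ) = 1 :=
            Matrix.mem_unitaryGroup_iff'.mp hH.eigenvectorUnitary.2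
          rw [Matrix.det_mul, Matrix.det_mul, mul_comm, ← mul_assoc, ← Matrix.det_mul,
            ← Matrix.det_mul, hU', Matrix.one_mul]
      _ = ∏ i, (1 + μ i) := by
          rw [← Matrix.diagonal_one, Matrix.diagonal_add, Matrix.det_diagonal]
          simp [RCLike.ofReal]
  have hterm : ∀ i : Fin d, μ i ≤ L * Real.log (1 + μ i) := by
    intro i
    refine scalar_step (hμ0 i) ?_ hL
    calc μ i ≤ ∑ j, μ j := Finset.single_le_sum (fun j _ => hμ0 j) (Finset.mem_univ i)
      _ = M.trace := htrace.symm
      _ ≤ L := htr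
  have hlog : Real.log ((1 + M).det) = ∑ i, Real.log (1 + μ i) := by
    rw [hdet, Real.log_prod]
    intro i _
    have := hμ0 i; positivity
  rw [htrace, hlog, Finset.mul_sum]
  exact Finset.sum_le_sum fun i _ => hterm i

lemma telescope_icc (g : ℕ → ℝ) (P : ℕ) :
    ∑ j ∈ Finset.Icc 1 P, (g (j + 1) - g j) = g (P + 1) - g 1 := by
  induction P with
  | zero => simp
  | succ n ih => rw [Finset.sum_Icc_succ_top (Nat.le_add_left 1 n), ih]; ring


/-- Telescoping elliptic potential: with `Σ_{j+1} = Σ_j + A_j` for PSD `A_j`, positive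
definite `Σ_j`, and per-step bound `tr(Σ_j^{-1/2} A_j Σ_j^{-1/2}) ≤ L` for `L ≥ e − 1`,
the sum of the per-step traces is at most `L · log (det Σ_{P+1} / det Σ₁)`. -/
theorem stmt_17 {d : ℕ} (P : ℕ)
    (S A : ℕ → Matrix (Fin d) (Fin d) ℝ)
    (hSpd : ∀ j, (S j).PosDef)
    (hA : ∀ j, (A j).PosSemidef)
    (hrec : ∀ j, 1 ≤ j → j ≤ P → S (j + 1) = S j + A j)
    (L : ℝ) (hL : Real.exp 1 - 1 ≤ L)
    (htr : ∀ j, 1 ≤ j → j ≤ P →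
      (((hSpd j).posSemidef.sqrt)⁻¹ * A j * ((hSpd j).posSemidef.sqrt)⁻¹).trace ≤ L) :
    ∑ j ∈ Finset.Icc 1 P,
        (((hSpd j).posSemidef.sqrt)⁻¹ * A j * ((hSpd j).posSemidef.sqrt)⁻¹).trace
      ≤ L * Real.log ((S (P + 1)).det / (S 1).det) := by
  have hdetpos : ∀ j, 0 < (S j).det := fun j => (hSpd j).det_pos
  have key : ∀ j ∈ Finset.Icc 1 P,
      (((hSpd j).posSemidef.sqrt)⁻¹ * A j * ((hSpd j).posSemidef.sqrt)⁻¹).trace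
      ≤ L * (Real.log (S (j+1)).det - Real.log (S j).det) := by
    intro j hj
    rw [Finset.mem_Icc] at hj
    obtain ⟨hj1, hjP⟩ := hj
    set B := (hSpd j).posSemidef.sqrt with hB
    have hBB : B * B = S j := (hSpd j).posSemidef.sqrt_mul_self
    have hdB : B.det ≠ 0 := by
      intro h
      have : (S j).det = B.det * B.det := by rw [← hBB, Matrix.det_mul]
      rw [h, mul_zero] at this
      exact (hdetpos j).ne this.symm
    have hBH : B⁻¹.IsHermitian := ((hSpd j).posSemidef.sqrt_isHermitian).inv
    have hMpsd : (B⁻¹ * A j * B⁻¹).PosSemidef := by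
      have := (hA j).mul_mul_conjTranspose_same B⁻¹
      rwa [hBH.eq] at this
    have h1M : (1 : Matrix (Fin d) (Fin d) ℝ) + B⁻¹ * A j * B⁻¹
        = B⁻¹ * S (j + 1) * B⁻¹ := by
      rw [hrec j hj1 hjP, ← hBB, Matrix.mul_add, Matrix.add_mul]
      congr 1
      rw [← Matrix.mul_assoc, Matrix.nonsing_inv_mul B (isUnit_iff_ne_zero.mpr hdB),
        Matrix.one_mul, Matrix.mul_nonsing_inv B (isUnit_iff_ne_zero.mpr hdB)]
    have hdet1M : ((1 : Matrix (Fin d) (Fin d) ℝ) + B⁻¹ * A j * B⁻¹).det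
        = (S (j + 1)).det / (S j).det := by
      rw [h1M, Matrix.det_mul, Matrix.det_mul, Matrix.det_nonsing_inv,
        Ring.inverse_eq_inv, ← hBB, Matrix.det_mul]
      field_simp
    have := trace_le_log_det hMpsd hL (htr j hj1 hjP)
    rw [hdet1M, Real.log_div (hdetpos (j+1)).ne' (hdetpos j).ne'] at this
    exact this
  calc ∑ j ∈ Finset.Icc 1 P,
        (((hSpd j).posSemidef.sqrt)⁻¹ * A j * ((hSpd j).posSemidef.sqrt)⁻¹).trace
      ≤ ∑ j ∈ Finset.Icc 1 P, L * (Real.log (S (j+1)).det - Real.log (S j).det) :=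
        Finset.sum_le_sum key
    _ = L * ∑ j ∈ Finset.Icc 1 P, (Real.log (S (j+1)).det - Real.log (S j).det) :=
        (Finset.mul_sum _ _ _).symm
    _ = L * (Real.log (S (P+1)).det - Real.log (S 1).det) := by
        rw [telescope_icc (fun j => Real.log (S j).det) P]
    _ = L * Real.log ((S (P + 1)).det / (S 1).det) := by
        rw [Real.log_div (hdetpos (P+1)).ne' (hdetpos 1).ne']
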